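/- arXiv:1909.02718 — 2 statements merged into one kernel-verified Lean document; each statement's English description precedes it below -/
import Mathlib

section
/- Let G be a connected graph. If for every nonempty proper subset S of V(G) the component graph β(G,S) belongs to G^cs, then G itself belongs to G^cs. -/
open SimpleGraph
open scoped Classical

variable {V : Type*} [Fintype V]

noncomputable def setWeight (w : V → ℝ) (A : Set V) : ℝ :=
  ∑ v : V, if v ∈ A then w v else 0

def IsComponentOf (G : SimpleGraph V) (S C : Set V) : Prop :=
  ∃ c : (G.induce S).ConnectedComponent,
    C = Subtype.val '' {x : ↥S | (G.induce S).connectedComponentMk x = c}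

def Touches (G : SimpleGraph V) (C D : Set V) : Prop :=
  ∃ a ∈ C, ∃ b ∈ D, G.Adj a b

def IsSafeSet (G : SimpleGraph V) (w : V → ℝ) (S : Set V) : Prop :=
  S.Nonempty ∧ S ≠ Set.univ ∧
    ∀ C D : Set V, IsComponentOf G S C → IsComponentOf G Sᶜ D → Touches G C D →
      setWeight w D ≤ setWeight w C

def IsConnSafeSet (G : SimpleGraph V) (w : V → ℝ) (S : Set V) : Prop :=
  IsSafeSet G w S ∧ (G.induce S).Connected

noncomputable def safeNumber (G : SimpleGraph V) (w : V → ℝ) : ℝ :=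
  sInf (setWeight w '' {S | IsSafeSet G w S})

noncomputable def connSafeNumber (G : SimpleGraph V) (w : V → ℝ) : ℝ :=
  sInf (setWeight w '' {S | IsConnSafeSet G w S})

def InGcs (G : SimpleGraph V) : Prop :=
  ∀ w : V → ℝ, (∀ v, 0 < w v) → safeNumber G w = connSafeNumber G w

def betaVerts (G : SimpleGraph V) (S : Set V) : Set (Set V) :=
  {C | IsComponentOf G S C ∨ IsComponentOf G Sᶜ C}

def betaGraph (G : SimpleGraph V) (S : Set V) : SimpleGraph ↥(betaVerts G S) where
  Adj C D := C ≠ D ∧ Touches G C.1 D.1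
  symm := by
    refine ⟨?_⟩
    rintro C D ⟨hne, a, ha, b, hb, hab⟩
    exact ⟨hne.symm, b, hb, a, ha, hab.symm⟩
  loopless := by refine ⟨?_⟩; rintro C ⟨hne, _⟩; exact hne rfl
section Generic

variable {W : Type*} [Fintype W]

lemma setWeight_singleton (w : W → ℝ) (a : W) : setWeight w ({a} : Set W) = w a := by
  classical
  simp [setWeight]

lemma setWeight_pos {w : W → ℝ} (hw : ∀ v, 0 < w v) {A : Set W} (hA : A.Nonempty) :
    0 < setWeight w A := by
  classical
  obtain ⟨a, ha⟩ := hA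
  apply Finset.sum_pos' (fun i _ => by by_cases h : i ∈ A <;> simp [h, (hw i).le])
  exact ⟨a, Finset.mem_univ a, by simp [ha, hw a]⟩

/-- The connected-component set of a vertex of an induced subgraph. -/
noncomputable def compSet (H : SimpleGraph W) (A : Set W) (x : ↥A) : Set W :=
  Subtype.val '' {z : ↥A | (H.induce A).connectedComponentMk z
    = (H.induce A).connectedComponentMk x}

lemma isComponentOf_compSet (H : SimpleGraph W) (A : Set W) (x : ↥A) :
    IsComponentOf H A (compSet H A x) :=
  ⟨_, rfl⟩

lemma mem_compSet_self (H : SimpleGraph W) (A : Set W) (x : ↥A) :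
    x.1 ∈ compSet H A x :=
  ⟨x, rfl, rfl⟩

lemma mem_compSet {H : SimpleGraph W} {A : Set W} {x : ↥A} {v : W} :
    v ∈ compSet H A x ↔ ∃ hv : v ∈ A,
      (H.induce A).connectedComponentMk ⟨v, hv⟩ = (H.induce A).connectedComponentMk x := by
  constructor
  · rintro ⟨z, hz, rfl⟩; exact ⟨z.2, hz⟩
  · rintro ⟨hv, hmk⟩; exact ⟨⟨v, hv⟩, hmk, rfl⟩

lemma compSet_eq {H : SimpleGraph W} {A : Set W} {x y : ↥A}
    (h : (H.induce A).connectedComponentMk x = (H.induce A).connectedComponentMk y) :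
    compSet H A x = compSet H A y := by
  unfold compSet; rw [h]

lemma IsComponentOf.nonempty {H : SimpleGraph W} {A C : Set W} (h : IsComponentOf H A C) :
    C.Nonempty := by
  obtain ⟨c, rfl⟩ := h
  obtain ⟨x, hx⟩ := c.exists_rep
  exact ⟨x.1, x, hx, rfl⟩

lemma IsComponentOf.subset {H : SimpleGraph W} {A C : Set W} (h : IsComponentOf H A C) :
    C ⊆ A := by
  obtain ⟨c, rfl⟩ := h
  rintro v ⟨z, _, rfl⟩
  exact z.2

lemma IsComponentOf.mem_of_reachable {H : SimpleGraph W} {A C : Set W}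
    (h : IsComponentOf H A C) {u v : W} (hu : u ∈ C) (hv : v ∈ A)
    (hr : (H.induce A).Reachable ⟨u, h.subset hu⟩ ⟨v, hv⟩) : v ∈ C := by
  obtain ⟨c, rfl⟩ := h
  obtain ⟨z, hz, rfl⟩ := hu
  refine ⟨⟨v, hv⟩, ?_, rfl⟩
  have : (⟨z.1, _⟩ : ↥A) = z := Subtype.ext rfl
  rw [Set.mem_setOf_eq, ← hz]
  exact (ConnectedComponent.sound (this ▸ hr)).symm

lemma IsComponentOf.reachable {H : SimpleGraph W} {A C : Set W}
    (h : IsComponentOf H A C) {u v : W} (hu : u ∈ C) (hv : v ∈ C) :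
    (H.induce A).Reachable ⟨u, h.subset hu⟩ ⟨v, h.subset hv⟩ := by
  obtain ⟨c, rfl⟩ := h
  obtain ⟨z, hz, rfl⟩ := hu
  obtain ⟨y, hy, rfl⟩ := hv
  have hzy : (H.induce A).connectedComponentMk z = (H.induce A).connectedComponentMk y := by
    rw [Set.mem_setOf_eq] at hz hy; rw [hz, hy]
  have h1 : (⟨z.1, _⟩ : ↥A) = z := Subtype.ext rfl
  have h2 : (⟨y.1, _⟩ : ↥A) = y := Subtype.ext rfl
  rw [h1, h2]
  exact ConnectedComponent.exact hzy

lemma isComponentOf_self {H : SimpleGraph W} {A : Set W} (hA : A.Nonempty)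
    (hc : (H.induce A).Connected) : IsComponentOf H A A := by
  obtain ⟨a, ha⟩ := hA
  refine ⟨(H.induce A).connectedComponentMk ⟨a, ha⟩, ?_⟩
  ext v
  constructor
  · intro hv
    exact ⟨⟨v, hv⟩, ConnectedComponent.sound (hc.preconnected _ _), rfl⟩
  · rintro ⟨z, _, rfl⟩; exact z.2

lemma IsComponentOf.eq_of_connected {H : SimpleGraph W} {A C : Set W}
    (hc : (H.induce A).Connected) (h : IsComponentOf H A C) : C = A := by
  refine Set.Subset.antisymm h.subset fun v hv => ?_
  obtain ⟨u, hu⟩ := h.nonempty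
  exact h.mem_of_reachable hu hv (hc.preconnected _ _)

lemma IsComponentOf.singleton {H : SimpleGraph W} {A : Set W}
    (hind : ∀ a ∈ A, ∀ b ∈ A, ¬ H.Adj a b) {C : Set W} (h : IsComponentOf H A C) :
    ∃ a : ↥A, C = {a.1} := by
  obtain ⟨c, rfl⟩ := h
  obtain ⟨x, hx⟩ := c.exists_rep
  refine ⟨x, ?_⟩
  have key : ∀ y : ↥A, (H.induce A).Reachable x y → x = y := by
    intro y hr
    obtain ⟨p⟩ := hr
    cases p with
    | nil => rfl
    | cons hadj _ => exact absurd hadj (hind _ x.2 _ (by exact Subtype.mem _))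
  ext v
  constructor
  · rintro ⟨z, hz, rfl⟩
    rw [Set.mem_setOf_eq, ← hx] at hz
    rw [key z (ConnectedComponent.exact hz).symm]
    rfl
  · rintro rfl
    exact ⟨x, hx, rfl⟩

end Generic
set_option linter.unusedSectionVars false

section Walks

variable {W : Type*} [Fintype W]

lemma reachable_mono {H : SimpleGraph W} {A B : Set W} (hAB : A ⊆ B) {x y : ↥A}
    (hr : (H.induce A).Reachable x y) :
    (H.induce B).Reachable ⟨x.1, hAB x.2⟩ ⟨y.1, hAB y.2⟩ :=
  hr.map (SimpleGraph.induceHomOfLE H hAB).toHom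

lemma walk_compSet {H : SimpleGraph W} {A : Set W} {x y : ↥A} (p : (H.induce A).Walk x y) :
    ∃ hy : y.1 ∈ compSet H A x,
      (H.induce (compSet H A x)).Reachable ⟨x.1, mem_compSet_self H A x⟩ ⟨y.1, hy⟩ := by
  induction p with
  | nil => exact ⟨mem_compSet_self _ _ _, .refl _⟩
  | @cons u v w hadj p ih =>
    obtain ⟨hy, hr⟩ := ih
    have hadjG : H.Adj u.1 v.1 := hadj
    have hmk : (H.induce A).connectedComponentMk v = (H.induce A).connectedComponentMk u :=
      (ConnectedComponent.sound hadj.reachable).symm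
    have hcs : compSet H A v = compSet H A u := compSet_eq hmk
    rw [hcs] at hy
    refine ⟨hy, .trans (SimpleGraph.Adj.reachable
      (show (H.induce (compSet H A u)).Adj ⟨u.1, mem_compSet_self _ _ _⟩
        ⟨v.1, hcs ▸ mem_compSet_self H A v⟩ from hadjG))
      (reachable_mono hcs.subset hr)⟩

lemma reach_in_compSet {H : SimpleGraph W} {A : Set W} {x : ↥A} {v : W}
    (hv : v ∈ compSet H A x) :
    (H.induce (compSet H A x)).Reachable ⟨x.1, mem_compSet_self H A x⟩ ⟨v, hv⟩ := by
  obtain ⟨hvA, hmk⟩ := mem_compSet.mp hv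
  obtain ⟨p⟩ := ConnectedComponent.exact hmk.symm
  obtain ⟨hy, hr⟩ := walk_compSet p
  exact hr

end Walks

section Part

variable {V : Type*} [Fintype V] (G : SimpleGraph V) (S : Set V)

/-- The β-vertex (component of `S` or of `Sᶜ`) containing `v`. -/
noncomputable def part (v : V) : Set V :=
  if hv : v ∈ S then compSet G S ⟨v, hv⟩
  else compSet G Sᶜ ⟨v, Set.mem_compl hv⟩

variable {G S}

lemma part_isComp_left {v : V} (hv : v ∈ S) : IsComponentOf G S (part G S v) := by
  unfold part; rw [dif_pos hv]; exact isComponentOf_compSet _ _ _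

lemma part_isComp_right {v : V} (hv : v ∉ S) : IsComponentOf G Sᶜ (part G S v) := by
  unfold part; rw [dif_neg hv]; exact isComponentOf_compSet _ _ _

lemma mem_part (v : V) : v ∈ part G S v := by
  rw [part]; split <;> exact mem_compSet_self _ _ _

lemma part_mem (v : V) : part G S v ∈ betaVerts G S := by
  by_cases hv : v ∈ S
  · exact Or.inl (part_isComp_left hv)
  · exact Or.inr (part_isComp_right hv)

lemma not_both {C : Set V} (hC : IsComponentOf G S C) (hC' : IsComponentOf G Sᶜ C) : False := by
  obtain ⟨v, hv⟩ := hC.nonempty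
  exact hC'.subset hv (hC.subset hv)

lemma part_unique {C : Set V} (hC : C ∈ betaVerts G S) {v : V} (hv : v ∈ C) :
    C = part G S v := by
  rcases hC with hC | hC
  · have hvS : v ∈ S := hC.subset hv
    obtain ⟨c, rfl⟩ := hC
    obtain ⟨z, hz, rfl⟩ := hv
    unfold part; rw [dif_pos z.2]
    have : (⟨z.1, z.2⟩ : ↥S) = z := Subtype.ext rfl
    rw [Set.mem_setOf_eq] at hz
    unfold compSet
    rw [this, hz]
  · have hvS : v ∈ Sᶜ := hC.subset hv
    obtain ⟨c, rfl⟩ := hC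
    obtain ⟨z, hz, rfl⟩ := hv
    unfold part; rw [dif_neg (Set.notMem_of_mem_compl z.2)]
    have : (⟨z.1, _⟩ : ↥Sᶜ) = z := Subtype.ext rfl
    rw [Set.mem_setOf_eq] at hz
    unfold compSet
    rw [this, hz]

lemma part_adj_left {u v : V} (hu : u ∈ S) (hv : v ∈ S) (huv : G.Adj u v) :
    part G S u = part G S v := by
  unfold part; rw [dif_pos hu, dif_pos hv]
  refine compSet_eq (ConnectedComponent.sound ?_)
  exact SimpleGraph.Adj.reachable (by exact huv)

lemma part_adj_right {u v : V} (hu : u ∉ S) (hv : v ∉ S) (huv : G.Adj u v) :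
    part G S u = part G S v := by
  unfold part; rw [dif_neg hu, dif_neg hv]
  refine compSet_eq (ConnectedComponent.sound ?_)
  exact SimpleGraph.Adj.reachable (by exact huv)

lemma no_touch_left {C D : Set V} (hC : IsComponentOf G S C) (hD : IsComponentOf G S D)
    (hne : C ≠ D) : ¬ Touches G C D := by
  rintro ⟨a, ha, b, hb, hab⟩
  apply hne
  rw [part_unique (Or.inl hC) ha, part_unique (Or.inl hD) hb]
  exact part_adj_left (hC.subset ha) (hD.subset hb) hab

lemma no_touch_right {C D : Set V} (hC : IsComponentOf G Sᶜ C) (hD : IsComponentOf G Sᶜ D)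
    (hne : C ≠ D) : ¬ Touches G C D := by
  rintro ⟨a, ha, b, hb, hab⟩
  apply hne
  rw [part_unique (Or.inr hC) ha, part_unique (Or.inr hD) hb]
  exact part_adj_right (Set.notMem_of_mem_compl (hC.subset ha))
    (Set.notMem_of_mem_compl (hD.subset hb)) hab

variable (G S) in
/-- The β-vertex containing `v`, as an element of `betaVerts`. -/
noncomputable def partβ (v : V) : ↥(betaVerts G S) := ⟨part G S v, part_mem v⟩

lemma partβ_unique {C : ↥(betaVerts G S)} {v : V} (hv : v ∈ C.1) : C = partβ G S v :=
  Subtype.ext (part_unique C.2 hv)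

lemma mem_part_of_partβ_eq {C : ↥(betaVerts G S)} {v : V} (h : partβ G S v = C) : v ∈ C.1 := by
  rw [← h]; exact mem_part v

lemma reach_in_of_mem_part {u v : V} (hv : v ∈ part G S u) {X : Set V}
    (hX : part G S u ⊆ X) :
    (G.induce X).Reachable ⟨u, hX (mem_part u)⟩ ⟨v, hX hv⟩ := by
  by_cases hu : u ∈ S
  · unfold part at hv hX; rw [dif_pos hu] at hv hX
    exact reachable_mono hX (reach_in_compSet hv)
  · unfold part at hv hX; rw [dif_neg hu] at hv hX
    exact reachable_mono hX (reach_in_compSet hv)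

end Part
section Beta

variable {V : Type*} [Fintype V] {G : SimpleGraph V} {S : Set V}

lemma mem_X_of_mem {𝒜 : Set ↥(betaVerts G S)} {C : ↥(betaVerts G S)} (hC : C ∈ 𝒜) {z : V}
    (hz : z ∈ C.1) : partβ G S z ∈ 𝒜 := by
  rw [← partβ_unique hz]; exact hC

lemma part_subset_X {𝒜 : Set ↥(betaVerts G S)} {v : V} (hv : partβ G S v ∈ 𝒜) :
    part G S v ⊆ {z | partβ G S z ∈ 𝒜} := by
  intro z hz
  have h : partβ G S v = partβ G S z := partβ_unique (C := partβ G S v) hz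
  rw [Set.mem_setOf_eq, ← h]; exact hv

lemma beta_adj_of_adj {u v : V} (huv : G.Adj u v) (hne : part G S u ≠ part G S v) :
    (betaGraph G S).Adj (partβ G S u) (partβ G S v) :=
  ⟨fun hh => hne (congrArg Subtype.val hh), u, mem_part u, v, mem_part v, huv⟩

lemma reach_beta {𝒜 : Set ↥(betaVerts G S)} {x y : ↥({v | partβ G S v ∈ 𝒜} : Set V)}
    (hr : (G.induce {v | partβ G S v ∈ 𝒜}).Reachable x y) :
    ((betaGraph G S).induce 𝒜).Reachable ⟨partβ G S x.1, x.2⟩ ⟨partβ G S y.1, y.2⟩ := by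
  obtain ⟨p⟩ := hr
  induction p with
  | nil => exact .refl _
  | @cons u v w hadj p ih =>
    have hadjG : G.Adj u.1 v.1 := hadj
    by_cases he : part G S u.1 = part G S v.1
    · have heq : (⟨partβ G S u.1, u.2⟩ : ↥𝒜) = ⟨partβ G S v.1, v.2⟩ := by
        apply Subtype.ext; apply Subtype.ext; exact he
      rw [heq]; exact ih
    · exact .trans (SimpleGraph.Adj.reachable
        (show ((betaGraph G S).induce 𝒜).Adj ⟨partβ G S u.1, u.2⟩ ⟨partβ G S v.1, v.2⟩ from
          beta_adj_of_adj hadjG he)) ih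

lemma reach_in_X_of_same {𝒜 : Set ↥(betaVerts G S)} {𝒞 : ↥(betaVerts G S)} (h𝒞 : 𝒞 ∈ 𝒜)
    {x y : V} (hx : x ∈ 𝒞.1) (hy : y ∈ 𝒞.1) :
    (G.induce {v | partβ G S v ∈ 𝒜}).Reachable
      ⟨x, mem_X_of_mem h𝒞 hx⟩ ⟨y, mem_X_of_mem h𝒞 hy⟩ := by
  have h1 : 𝒞 = partβ G S x := partβ_unique hx
  rw [h1] at hy
  exact reach_in_of_mem_part hy (part_subset_X (h1 ▸ h𝒞))

lemma reach_of_beta {𝒜 : Set ↥(betaVerts G S)} :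
    ∀ {𝒞 𝒟 : ↥𝒜} (_ : ((betaGraph G S).induce 𝒜).Walk 𝒞 𝒟) {x y : V}
      (hx : x ∈ 𝒞.1.1) (hy : y ∈ 𝒟.1.1),
    (G.induce {v | partβ G S v ∈ 𝒜}).Reachable
      ⟨x, mem_X_of_mem 𝒞.2 hx⟩ ⟨y, mem_X_of_mem 𝒟.2 hy⟩ := by
  intro 𝒞 𝒟 p
  induction p with
  | nil =>
    intro x y hx hy
    exact reach_in_X_of_same (Subtype.mem _) hx hy
  | @cons 𝒞 ℬ 𝒟 hadj p ih =>
    intro x y hx hy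
    obtain ⟨hne, a, ha, b, hb, hab⟩ := hadj
    refine .trans (reach_in_X_of_same 𝒞.2 hx ha) (.trans (SimpleGraph.Adj.reachable
      (show (G.induce {v | partβ G S v ∈ 𝒜}).Adj
        ⟨a, mem_X_of_mem 𝒞.2 ha⟩ ⟨b, mem_X_of_mem ℬ.2 hb⟩ from hab)) (ih hb hy))

lemma weight_eq (w : V → ℝ) (𝒜 : Set ↥(betaVerts G S)) :
    setWeight (fun C : ↥(betaVerts G S) => setWeight w C.1) 𝒜
      = setWeight w {v | partβ G S v ∈ 𝒜} := by
  classical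
  unfold setWeight
  have step1 : ∀ C : ↥(betaVerts G S),
      (if C ∈ 𝒜 then (∑ v : V, if v ∈ C.1 then w v else 0) else 0)
        = ∑ v : V, if C ∈ 𝒜 ∧ v ∈ C.1 then w v else 0 := by
    intro C
    split_ifs with hC
    · exact Finset.sum_congr rfl fun v _ => by simp [hC]
    · symm; apply Finset.sum_eq_zero; intro v _; simp [hC]
  rw [Finset.sum_congr rfl fun C _ => step1 C, Finset.sum_comm]
  refine Finset.sum_congr rfl fun v _ => ?_
  rw [Finset.sum_eq_single (partβ G S v)]
  · simp [partβ, mem_part v, Set.mem_setOf_eq]; congr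
  · intro C _ hne
    rw [if_neg]
    rintro ⟨-, hvC⟩
    exact hne (partβ_unique hvC)
  · intro habs; exact absurd (Finset.mem_univ _) habs

end Beta
section Main

variable {V : Type*} [Fintype V]

lemma betaVert_nonempty {G : SimpleGraph V} {S : Set V} (C : ↥(betaVerts G S)) :
    C.1.Nonempty := by
  rcases C.2 with hC | hC <;> exact hC.nonempty

lemma exists_conn_safe (G : SimpleGraph V)
    (h : ∀ S : Set V, S.Nonempty → S ≠ Set.univ → InGcs (betaGraph G S))
    (w : V → ℝ) (hw : ∀ v, 0 < w v) {S₀ : Set V} (hS₀ : IsSafeSet G w S₀) :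
    ∃ T : Set V, IsConnSafeSet G w T ∧ setWeight w T ≤ setWeight w S₀ := by
  classical
  obtain ⟨hS₀ne, hS₀nu, hsafe⟩ := hS₀
  set W : ↥(betaVerts G S₀) → ℝ := fun C => setWeight w C.1 with hWdef
  have hWpos : ∀ C : ↥(betaVerts G S₀), 0 < W C := fun C =>
    setWeight_pos hw (betaVert_nonempty C)
  have hβeq := h S₀ hS₀ne hS₀nu W hWpos
  set 𝒮 : Set ↥(betaVerts G S₀) := {C | IsComponentOf G S₀ C.1} with h𝒮def
  have h𝒮X : {v | partβ G S₀ v ∈ 𝒮} = S₀ := by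
    ext v
    simp only [Set.mem_setOf_eq, h𝒮def]
    constructor
    · intro hv
      by_contra hvn
      exact not_both hv (part_isComp_right hvn)
    · intro hv
      exact part_isComp_left hv
  have h𝒮safe : IsSafeSet (betaGraph G S₀) W 𝒮 := by
    obtain ⟨v₀, hv₀⟩ := hS₀ne
    obtain ⟨v₁, hv₁⟩ := Set.ne_univ_iff_exists_notMem _ |>.mp hS₀nu
    refine ⟨⟨partβ G S₀ v₀, part_isComp_left hv₀⟩, ?_, ?_⟩
    · apply Set.ne_univ_iff_exists_notMem _ |>.mpr
      exact ⟨partβ G S₀ v₁, fun hmem => not_both hmem (part_isComp_right hv₁)⟩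
    · intro 𝒞 𝒟 h𝒞 h𝒟 ht
      have hindS : ∀ A ∈ 𝒮, ∀ B ∈ 𝒮, ¬ (betaGraph G S₀).Adj A B := by
        intro A hA B hB hadj
        exact no_touch_left hA hB (fun hh => hadj.1 (Subtype.ext hh)) hadj.2
      have hindC : ∀ A ∈ 𝒮ᶜ, ∀ B ∈ 𝒮ᶜ, ¬ (betaGraph G S₀).Adj A B := by
        intro A hA B hB hadj
        have hA' : IsComponentOf G S₀ᶜ A.1 := A.2.resolve_left hA
        have hB' : IsComponentOf G S₀ᶜ B.1 := B.2.resolve_left hB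
        exact no_touch_right hA' hB' (fun hh => hadj.1 (Subtype.ext hh)) hadj.2
      obtain ⟨C₀, rfl⟩ := h𝒞.singleton hindS
      obtain ⟨D₀, rfl⟩ := h𝒟.singleton hindC
      obtain ⟨a, ha, b, hb, hab⟩ := ht
      rw [Set.mem_singleton_iff] at ha hb
      subst ha; subst hb
      rw [setWeight_singleton, setWeight_singleton]
      have hC₀ : IsComponentOf G S₀ (C₀.1).1 := C₀.2
      have hD₀ : IsComponentOf G S₀ᶜ (D₀.1).1 := (D₀.1).2.resolve_left D₀.2
      exact hsafe _ _ hC₀ hD₀ hab.2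
  have himg_safe_ne : (setWeight W '' {A | IsSafeSet (betaGraph G S₀) W A}).Nonempty :=
    ⟨setWeight W 𝒮, 𝒮, h𝒮safe, rfl⟩
  have hfin1 : (setWeight W '' {A | IsSafeSet (betaGraph G S₀) W A}).Finite :=
    Set.Finite.image _ (Set.toFinite _)
  have hfin2 : (setWeight W '' {A | IsConnSafeSet (betaGraph G S₀) W A}).Finite :=
    Set.Finite.image _ (Set.toFinite _)
  have hβsafe_le : safeNumber (betaGraph G S₀) W ≤ setWeight w S₀ := by
    have hle := csInf_le hfin1.bddBelow (Set.mem_image_of_mem _ h𝒮safe)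
    rwa [show setWeight W 𝒮 = setWeight w S₀ from by rw [hWdef, weight_eq, h𝒮X]] at hle
  have hconn_ne : {A | IsConnSafeSet (betaGraph G S₀) W A}.Nonempty := by
    by_contra hemp
    rw [Set.not_nonempty_iff_eq_empty] at hemp
    have h0 : connSafeNumber (betaGraph G S₀) W = 0 := by
      rw [connSafeNumber, hemp, Set.image_empty, Real.sInf_empty]
    obtain ⟨A, hA, hAeq⟩ := himg_safe_ne.csInf_mem hfin1
    have hpos : 0 < setWeight W A := setWeight_pos hWpos hA.1
    have heq2 : setWeight W A = connSafeNumber (betaGraph G S₀) W := by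
      rw [← hβeq]; exact hAeq
    rw [heq2, h0] at hpos
    exact lt_irrefl 0 hpos
  obtain ⟨𝒯, h𝒯, h𝒯eq⟩ := (hconn_ne.image (setWeight W)).csInf_mem hfin2
  obtain ⟨⟨h𝒯ne, h𝒯nu, h𝒯safe⟩, h𝒯conn⟩ := h𝒯
  have h𝒯le : setWeight W 𝒯 ≤ setWeight w S₀ := by
    have : setWeight W 𝒯 = safeNumber (betaGraph G S₀) W := by rw [hβeq]; exact h𝒯eq
    rw [this]; exact hβsafe_le
  set T : Set V := {v | partβ G S₀ v ∈ 𝒯} with hTdef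
  have hTw : setWeight w T = setWeight W 𝒯 := by rw [hWdef, weight_eq]
  have hTne : T.Nonempty := by
    obtain ⟨C, hC⟩ := h𝒯ne
    obtain ⟨v, hv⟩ := betaVert_nonempty C
    exact ⟨v, mem_X_of_mem hC hv⟩
  have hTnu : T ≠ Set.univ := by
    obtain ⟨C, hC⟩ := Set.ne_univ_iff_exists_notMem _ |>.mp h𝒯nu
    obtain ⟨v, hv⟩ := betaVert_nonempty C
    apply Set.ne_univ_iff_exists_notMem _ |>.mpr
    refine ⟨v, fun hvT => ?_⟩
    have : C = partβ G S₀ v := partβ_unique hv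
    rw [this] at hC
    exact hC hvT
  have hTconn : (G.induce T).Connected := by
    rw [SimpleGraph.connected_iff]
    refine ⟨?_, hTne.to_subtype⟩
    intro x y
    obtain ⟨p⟩ := h𝒯conn.preconnected ⟨partβ G S₀ x.1, x.2⟩ ⟨partβ G S₀ y.1, y.2⟩
    have hr := reach_of_beta p (mem_part x.1) (mem_part y.1)
    exact hr
  have hTc : (Tᶜ : Set V) = {v | partβ G S₀ v ∈ 𝒯ᶜ} := rfl
  refine ⟨T, ⟨⟨hTne, hTnu, ?_⟩, hTconn⟩, by rw [hTw]; exact h𝒯le⟩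
  intro C' D' hC' hD' ht
  have hC'T : C' = T := hC'.eq_of_connected hTconn
  subst hC'T
  rw [hTc] at hD'
  obtain ⟨u₀, hu₀⟩ := hD'.nonempty
  have hu₀c : partβ G S₀ u₀ ∈ 𝒯ᶜ := hD'.subset hu₀
  set 𝒟 : Set ↥(betaVerts G S₀) := {C | ∃ v ∈ D', partβ G S₀ v = C} with h𝒟def
  have h𝒟sub : ∀ {v : V}, v ∈ D' → partβ G S₀ v ∈ 𝒟 := fun hv => ⟨_, hv, rfl⟩
  have hD'X : D' = {v | partβ G S₀ v ∈ 𝒟} := by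
    apply Set.Subset.antisymm
    · intro v hv; exact h𝒟sub hv
    · rintro v ⟨u, hu, hpu⟩
      have hvpu : v ∈ part G S₀ u := by
        rw [show part G S₀ u = part G S₀ v from congrArg Subtype.val hpu]
        exact mem_part v
      have hpsub : part G S₀ u ⊆ {z | partβ G S₀ z ∈ 𝒯ᶜ} :=
        part_subset_X (𝒜 := 𝒯ᶜ) (hD'.subset hu)
      have hreach := reach_in_of_mem_part hvpu hpsub
      exact hD'.mem_of_reachable hu (hpsub hvpu) hreach
  have h𝒟comp : IsComponentOf (betaGraph G S₀) 𝒯ᶜ 𝒟 := by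
    refine ⟨((betaGraph G S₀).induce 𝒯ᶜ).connectedComponentMk ⟨partβ G S₀ u₀, hu₀c⟩, ?_⟩
    ext C
    constructor
    · rintro ⟨u, hu, rfl⟩
      have huc : partβ G S₀ u ∈ 𝒯ᶜ := hD'.subset hu
      refine ⟨⟨partβ G S₀ u, huc⟩, ?_, rfl⟩
      rw [Set.mem_setOf_eq]
      apply ConnectedComponent.sound
      have hr : (G.induce {v | partβ G S₀ v ∈ 𝒯ᶜ}).Reachable
          ⟨u, hD'.subset hu⟩ ⟨u₀, hD'.subset hu₀⟩ := hD'.reachable hu hu₀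
      exact reach_beta hr
    · rintro ⟨X, hX, rfl⟩
      rw [Set.mem_setOf_eq] at hX
      have hr : ((betaGraph G S₀).induce 𝒯ᶜ).Reachable X ⟨partβ G S₀ u₀, hu₀c⟩ :=
        ConnectedComponent.exact hX
      obtain ⟨p⟩ := hr
      obtain ⟨x, hx⟩ := betaVert_nonempty X.1
      have hrx := reach_of_beta p hx (mem_part u₀)
      have hxD' : x ∈ D' := hD'.mem_of_reachable hu₀ (mem_X_of_mem X.2 hx) hrx.symm
      exact ⟨x, hxD', (partβ_unique hx).symm⟩
  have htβ : Touches (betaGraph G S₀) 𝒯 𝒟 := by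
    obtain ⟨a, ha, b, hb, hab⟩ := ht
    have haT : partβ G S₀ a ∈ 𝒯 := ha
    have hb𝒟 : partβ G S₀ b ∈ 𝒟 := h𝒟sub hb
    have hne : part G S₀ a ≠ part G S₀ b := by
      intro he
      have heq : partβ G S₀ a = partβ G S₀ b := Subtype.ext he
      have hbT : partβ G S₀ b ∈ 𝒯 := by rw [← heq]; exact haT
      exact (hD'.subset hb) hbT
    exact ⟨partβ G S₀ a, haT, partβ G S₀ b, hb𝒟, beta_adj_of_adj hab hne⟩
  have h𝒯𝒯 : IsComponentOf (betaGraph G S₀) 𝒯 𝒯 := isComponentOf_self h𝒯ne h𝒯conn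
  have hfinal := h𝒯safe 𝒯 𝒟 h𝒯𝒯 h𝒟comp htβ
  calc setWeight w D' = setWeight W 𝒟 := by rw [hD'X, hWdef, weight_eq]
    _ ≤ setWeight W 𝒯 := hfinal
    _ = setWeight w T := by rw [hWdef, weight_eq]

end Main

theorem stmt_2 (G : SimpleGraph V) (hG : G.Connected)
    (h : ∀ S : Set V, S.Nonempty → S ≠ Set.univ → InGcs (betaGraph G S)) :
    InGcs G := by
  intro w hw
  rcases Set.eq_empty_or_nonempty {S : Set V | IsSafeSet G w S} with hemp | ⟨S₀, hS₀⟩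
  · have hconn_emp : {S : Set V | IsConnSafeSet G w S} = ∅ := by
      rw [Set.eq_empty_iff_forall_notMem] at hemp ⊢
      intro S hS; exact hemp S hS.1
    rw [safeNumber, connSafeNumber, hemp, hconn_emp]
  · have hfin1 : (setWeight w '' {S : Set V | IsSafeSet G w S}).Finite :=
      Set.Finite.image _ (Set.toFinite _)
    have hfin2 : (setWeight w '' {S : Set V | IsConnSafeSet G w S}).Finite :=
      Set.Finite.image _ (Set.toFinite _)
    obtain ⟨S₁, hS₁, hS₁eq⟩ := (Set.Nonempty.image (setWeight w) ⟨S₀, hS₀⟩).csInf_mem hfin1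
    obtain ⟨T, hT, hTle⟩ := exists_conn_safe G h w hw hS₁
    apply le_antisymm
    · refine le_csInf ⟨setWeight w T, T, hT, rfl⟩ ?_
      rintro b ⟨A, hA, rfl⟩
      exact csInf_le hfin1.bddBelow ⟨A, hA.1, rfl⟩
    · calc connSafeNumber G w ≤ setWeight w T := csInf_le hfin2.bddBelow ⟨T, hT, rfl⟩
        _ ≤ setWeight w S₁ := hTle
        _ = safeNumber G w := hS₁eq
end

section
/- Let G = (X,Y) be a connected bipartite graph in G^cs with |V(G)| ≥ 5. Then no two vertices of degree two in G have the same neighborhood. -/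
open SimpleGraph
open scoped Classical

variable {V : Type*} [Fintype V]

/-! ### setWeight lemmas -/

lemma sw_nonneg (w : V → ℝ) (hw : ∀ v, 0 ≤ w v) (A : Set V) : 0 ≤ setWeight w A := by
  apply Finset.sum_nonneg; intro v _; by_cases h : v ∈ A <;> simp [h, hw v]

lemma sw_mono (w : V → ℝ) (hw : ∀ v, 0 ≤ w v) {A B : Set V} (h : A ⊆ B) :
    setWeight w A ≤ setWeight w B := by
  apply Finset.sum_le_sum; intro v _
  by_cases hv : v ∈ A
  · simp [hv, h hv]
  · by_cases hv' : v ∈ B <;> simp [hv, hv', hw v]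

lemma sw_union_le (w : V → ℝ) (hw : ∀ v, 0 ≤ w v) (A B : Set V) :
    setWeight w (A ∪ B) ≤ setWeight w A + setWeight w B := by
  rw [setWeight, setWeight, setWeight, ← Finset.sum_add_distrib]
  apply Finset.sum_le_sum; intro v _
  by_cases hA : v ∈ A <;> by_cases hB : v ∈ B <;> simp [hA, hB, hw v]

lemma sw_singleton (w : V → ℝ) (v : V) : setWeight w {v} = w v := by
  rw [setWeight]
  simp only [Set.mem_singleton_iff]
  simp [Finset.sum_ite_eq']

lemma sw_insert (w : V → ℝ) {p : V} {A : Set V} (h : p ∉ A) :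
    setWeight w (insert p A) = w p + setWeight w A := by
  rw [setWeight, setWeight]
  trans (∑ v : V, ((if v = p then w v else 0) + if v ∈ A then w v else 0))
  · apply Finset.sum_congr rfl
    intro v _
    by_cases hv : v = p
    · subst hv; simp [h]
    · by_cases hA : v ∈ A <;> simp [hv, hA]
  · rw [Finset.sum_add_distrib, Finset.sum_ite_eq' Finset.univ p w]
    simp

lemma sw_pair (w : V → ℝ) {p q : V} (h : p ≠ q) : setWeight w {p, q} = w p + w q := by
  rw [show ({p, q} : Set V) = insert p {q} from rfl, sw_insert w (by simp [h]), sw_singleton]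

lemma sw_triple (w : V → ℝ) {p q r : V} (hpq : p ≠ q) (hpr : p ≠ r) (hqr : q ≠ r) :
    setWeight w {p, q, r} = w p + w q + w r := by
  rw [show ({p, q, r} : Set V) = insert p {q, r} from rfl, sw_insert w (by simp [hpq, hpr]),
    sw_pair w hqr]; ring

lemma le_sw_pair (w : V → ℝ) (hw : ∀ v, 0 ≤ w v) {p q : V} {A : Set V}
    (hp : p ∈ A) (hq : q ∈ A) (h : p ≠ q) : w p + w q ≤ setWeight w A := by
  rw [← sw_pair w h]
  exact sw_mono w hw (by rintro v (rfl | rfl) <;> assumption)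

lemma le_sw_triple (w : V → ℝ) (hw : ∀ v, 0 ≤ w v) {p q r : V} {A : Set V}
    (hp : p ∈ A) (hq : q ∈ A) (hr : r ∈ A) (hpq : p ≠ q) (hpr : p ≠ r) (hqr : q ≠ r) :
    w p + w q + w r ≤ setWeight w A := by
  rw [← sw_triple w hpq hpr hqr]
  exact sw_mono w hw (by rintro v (rfl | rfl | rfl) <;> assumption)

lemma le_sw_mem (w : V → ℝ) (hw : ∀ v, 0 ≤ w v) {p : V} {A : Set V} (hp : p ∈ A) :
    w p ≤ setWeight w A := by
  rw [← sw_singleton w p]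
  exact sw_mono w hw (by rintro v rfl; exact hp)

lemma sw_le_bound (w : V → ℝ) {A : Set V} {c : ℝ} (hc : 0 ≤ c) (h : ∀ v ∈ A, w v ≤ c) :
    setWeight w A ≤ (Fintype.card V : ℝ) * c := by
  rw [setWeight]
  calc (∑ v : V, if v ∈ A then w v else 0) ≤ ∑ _v : V, c := by
        apply Finset.sum_le_sum; intro v _
        by_cases hv : v ∈ A <;> simp [hv, h v, hc]
    _ = (Fintype.card V : ℝ) * c := by
        rw [Finset.sum_const, Finset.card_univ, nsmul_eq_mul]

/-- T is covered by {s} plus small weights: setWeight ≤ w s + n ε -/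
lemma sw_le_one_plus (w : V → ℝ) (hw : ∀ v, 0 ≤ w v) {T : Set V} {s : V} {ε : ℝ} (hε : 0 ≤ ε)
    (h : ∀ v ∈ T, v = s ∨ w v ≤ ε) :
    setWeight w T ≤ w s + (Fintype.card V : ℝ) * ε := by
  have hsub : T ⊆ {s} ∪ (T \ {s}) := by
    intro v hv; by_cases hvs : v = s
    · exact Or.inl (by simp [hvs])
    · exact Or.inr ⟨hv, by simp [hvs]⟩
  calc setWeight w T ≤ setWeight w ({s} ∪ (T \ {s})) := sw_mono w hw hsub
    _ ≤ setWeight w {s} + setWeight w (T \ {s}) := sw_union_le w hw _ _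
    _ ≤ w s + (Fintype.card V : ℝ) * ε := by
        rw [sw_singleton]
        have : setWeight w (T \ {s}) ≤ (Fintype.card V : ℝ) * ε := by
          apply sw_le_bound w hε
          intro v hv
          rcases h v hv.1 with h1 | h1
          · exact absurd h1 (by simpa using hv.2)
          · exact h1
        linarith

lemma sw_le_two_plus (w : V → ℝ) (hw : ∀ v, 0 ≤ w v) {T : Set V} {s t : V} {ε : ℝ}
    (hst : s ≠ t) (hε : 0 ≤ ε) (h : ∀ v ∈ T, v = s ∨ v = t ∨ w v ≤ ε) :
    setWeight w T ≤ w s + w t + (Fintype.card V : ℝ) * ε := by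
  have hsub : T ⊆ {s, t} ∪ (T \ {s, t}) := by
    intro v hv; by_cases hvs : v ∈ ({s, t} : Set V)
    · exact Or.inl hvs
    · exact Or.inr ⟨hv, hvs⟩
  calc setWeight w T ≤ setWeight w ({s, t} ∪ (T \ {s, t})) := sw_mono w hw hsub
    _ ≤ setWeight w {s, t} + setWeight w (T \ {s, t}) := sw_union_le w hw _ _
    _ ≤ w s + w t + (Fintype.card V : ℝ) * ε := by
        rw [sw_pair w hst]
        have : setWeight w (T \ {s, t}) ≤ (Fintype.card V : ℝ) * ε := by
          apply sw_le_bound w hε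
          intro v hv
          rcases h v hv.1 with h1 | h1 | h1
          · exact absurd h1 (by intro hh; exact hv.2 (by simp [hh]))
          · exact absurd h1 (by intro hh; exact hv.2 (by simp [hh]))
          · exact h1
        linarith
/-! ### Component lemmas -/

lemma walk_closed {W : Type*} (H : SimpleGraph W) (A : Set W)
    (hA : ∀ p ∈ A, ∀ q, H.Adj p q → q ∈ A) :
    ∀ {u v : W}, H.Walk u v → u ∈ A → v ∈ A := by
  intro u v wlk
  induction wlk with
  | nil => exact id
  | cons hadj _ ih => intro hu; exact ih (hA _ hu _ hadj)

lemma reach_closed {W : Type*} (H : SimpleGraph W) (A : Set W)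
    (hA : ∀ p ∈ A, ∀ q, H.Adj p q → q ∈ A) {u v : W} (h : H.Reachable u v) (hu : u ∈ A) :
    v ∈ A := by
  obtain ⟨wlk⟩ := h
  exact walk_closed H A hA wlk hu

noncomputable def cSet (G : SimpleGraph V) (S : Set V) (p : V) (hp : p ∈ S) : Set V :=
  Subtype.val '' {x : ↥S |
    (G.induce S).connectedComponentMk x = (G.induce S).connectedComponentMk ⟨p, hp⟩}

lemma cSet_isComp (G : SimpleGraph V) (S : Set V) (p : V) (hp : p ∈ S) :
    IsComponentOf G S (cSet G S p hp) := ⟨_, rfl⟩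

lemma mem_cSet (G : SimpleGraph V) (S : Set V) (p : V) (hp : p ∈ S) :
    p ∈ cSet G S p hp := ⟨⟨p, hp⟩, rfl, rfl⟩

lemma comp_subset {G : SimpleGraph V} {S C : Set V} (h : IsComponentOf G S C) : C ⊆ S := by
  obtain ⟨c, rfl⟩ := h
  rintro _ ⟨x, _, rfl⟩
  exact x.2

lemma comp_nonempty {G : SimpleGraph V} {S C : Set V} (h : IsComponentOf G S C) :
    C.Nonempty := by
  obtain ⟨c, rfl⟩ := h
  obtain ⟨x, hx⟩ := c.exists_rep
  exact ⟨x.1, x, hx, rfl⟩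

lemma induce_adj' {G : SimpleGraph V} {S : Set V} {p q : V} (hp : p ∈ S) (hq : q ∈ S)
    (h : G.Adj p q) : (G.induce S).Adj ⟨p, hp⟩ ⟨q, hq⟩ := h

lemma comp_closed {G : SimpleGraph V} {S C : Set V} (h : IsComponentOf G S C) {p q : V}
    (hp : p ∈ C) (hq : q ∈ S) (hadj : G.Adj p q) : q ∈ C := by
  obtain ⟨c, rfl⟩ := h
  obtain ⟨⟨p', hp'S⟩, hmk, hval⟩ := hp
  simp only at hval
  subst hval
  refine ⟨⟨q, hq⟩, ?_, rfl⟩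
  show (G.induce S).connectedComponentMk ⟨q, hq⟩ = c
  rw [← hmk]
  exact SimpleGraph.ConnectedComponent.sound (induce_adj' hp'S hq hadj).reachable.symm

lemma comp_rep {G : SimpleGraph V} {S C : Set V} (h : IsComponentOf G S C) {p : V}
    (hp : p ∈ C) : C = cSet G S p (comp_subset h hp) := by
  obtain ⟨c, rfl⟩ := h
  obtain ⟨⟨p', hp'S⟩, hmk, hval⟩ := hp
  simp only at hval
  subst hval
  unfold cSet
  rw [show (G.induce S).connectedComponentMk ⟨p', _⟩ = c from hmk]

lemma comp_subset_of_closed {G : SimpleGraph V} {S C : Set V} (h : IsComponentOf G S C)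
    {p : V} (hp : p ∈ C) (A : Set V) (hpA : p ∈ A)
    (hA : ∀ u ∈ A, ∀ q ∈ S, G.Adj u q → q ∈ A) : C ⊆ A := by
  rw [comp_rep h hp]
  rintro _ ⟨x, hx, rfl⟩
  have hreach : (G.induce S).Reachable ⟨p, comp_subset h hp⟩ x :=
    ((SimpleGraph.ConnectedComponent.eq).mp hx).symm
  have := reach_closed (G.induce S) {y : ↥S | y.1 ∈ A}
    (fun u hu q hadj => hA u.1 hu q.1 q.2 hadj) hreach hpA
  exact this

lemma conn_subset {G : SimpleGraph V} {T : Set V} (hT : (G.induce T).Connected)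
    (A : Set V) {u : V} (hu : u ∈ A) (huT : u ∈ T)
    (hA : ∀ p ∈ A, ∀ q ∈ T, G.Adj p q → q ∈ A) : T ⊆ A := by
  intro v hv
  have hreach : (G.induce T).Reachable ⟨u, huT⟩ ⟨v, hv⟩ := hT.preconnected _ _
  exact reach_closed (G.induce T) {y : ↥T | y.1 ∈ A}
    (fun p hp q hadj => hA p.1 hp q.1 q.2 hadj) hreach hu

lemma conn_isComp {G : SimpleGraph V} {T : Set V} (hT : (G.induce T).Connected) :
    IsComponentOf G T T := by
  obtain ⟨u⟩ := hT.nonempty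
  refine ⟨(G.induce T).connectedComponentMk u, ?_⟩
  ext v
  constructor
  · intro hv
    exact ⟨⟨v, hv⟩, SimpleGraph.ConnectedComponent.sound (hT.preconnected _ _), rfl⟩
  · rintro ⟨x, _, rfl⟩
    exact x.2

lemma crossing {G : SimpleGraph V} (hG : G.Connected) {A : Set V} (hA : A.Nonempty)
    {v₀ : V} (hv₀ : v₀ ∉ A) : ∃ u ∈ A, ∃ v, v ∉ A ∧ G.Adj u v := by
  by_contra hcon
  push_neg at hcon
  obtain ⟨a, ha⟩ := hA
  have : v₀ ∈ A := reach_closed G A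
    (fun p hp q hadj => by
      by_contra hq
      exact (hcon p hp q hq) hadj)
    (hG.preconnected a v₀) ha
  exact hv₀ this

lemma comp_touches {G : SimpleGraph V} (hG : G.Connected) {T D : Set V} (hT : T.Nonempty)
    (hD : IsComponentOf G Tᶜ D) : Touches G T D := by
  have hDne := comp_nonempty hD
  obtain ⟨t, ht⟩ := hT
  have htD : t ∉ D := fun h => (comp_subset hD h) ht
  obtain ⟨u, hu, v, hv, hadj⟩ := crossing hG hDne htD
  by_cases hvT : v ∈ T
  · exact ⟨v, hvT, u, hu, hadj.symm⟩
  · exact absurd (comp_closed hD hu hvT hadj) hv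

/-- The key violation lemma: for a connected safe set `T`, any component of the complement
weighs at most `T`. -/
lemma viol_le {G : SimpleGraph V} {w : V → ℝ} {T : Set V} (hG : G.Connected)
    (hT : IsConnSafeSet G w T) {p : V} (hp : p ∉ T) :
    setWeight w (cSet G Tᶜ p hp) ≤ setWeight w T := by
  exact hT.1.2.2 T (cSet G Tᶜ p hp) (conn_isComp hT.2) (cSet_isComp G Tᶜ p hp)
    (comp_touches hG hT.1.1 (cSet_isComp G Tᶜ p hp))
/-! ### Endgame -/

lemma endgame {G : SimpleGraph V} (w : V → ℝ) (hwpos : ∀ v, 0 < w v)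
    {S0 : Set V} (hS0 : IsSafeSet G w S0) {B δ : ℝ} (hδ : 0 < δ)
    (hwt : setWeight w S0 ≤ B)
    (hlow : ∀ T : Set V, IsConnSafeSet G w T → B + δ ≤ setWeight w T) :
    safeNumber G w ≠ connSafeNumber G w := by
  have hw0 : ∀ v, 0 ≤ w v := fun v => (hwpos v).le
  intro heq
  have hbdd : BddBelow (setWeight w '' {S : Set V | IsSafeSet G w S}) := by
    refine ⟨0, ?_⟩
    rintro r ⟨S, _, rfl⟩
    exact sw_nonneg w hw0 S
  have hs_le : safeNumber G w ≤ B :=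
    le_trans (csInf_le hbdd ⟨S0, hS0, rfl⟩) hwt
  by_cases hne : {S : Set V | IsConnSafeSet G w S}.Nonempty
  · have hcs_ge : B + δ ≤ connSafeNumber G w := by
      apply le_csInf (hne.image _)
      rintro r ⟨T, hT, rfl⟩
      exact hlow T hT
    rw [← heq] at hcs_ge
    linarith
  · have himg : setWeight w '' {S : Set V | IsConnSafeSet G w S} = ∅ := by
      rw [Set.not_nonempty_iff_eq_empty] at hne
      rw [hne, Set.image_empty]
    have hcs0 : connSafeNumber G w = 0 := by
      rw [connSafeNumber, himg, Real.sInf_empty]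
    -- safeNumber is positive
    obtain ⟨v₁, hv₁⟩ := hS0.1
    obtain ⟨ε, hε, hεle⟩ : ∃ ε > 0, ∀ v : V, ε ≤ w v := by
      obtain ⟨m, _, hm⟩ := Finset.exists_min_image Finset.univ w ⟨v₁, Finset.mem_univ v₁⟩
      exact ⟨w m, hwpos m, fun v => hm v (Finset.mem_univ v)⟩
    have hs_ge : ε ≤ safeNumber G w := by
      refine le_csInf ⟨setWeight w S0, ⟨S0, hS0, rfl⟩⟩ ?_
      rintro r ⟨S, hS, rfl⟩
      obtain ⟨u, hu⟩ := hS.1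
      exact le_trans (hεle u) (le_sw_mem w hw0 hu)
    rw [heq, hcs0] at hs_ge
    linarith
/-! ### Main case: both x and y have neighbors outside {a,b} -/

lemma mainCase (G : SimpleGraph V) (hG : G.Connected) (a b x y x' y' : V)
    (hab : a ≠ b) (hxy : x ≠ y) (hax : a ≠ x) (hay : a ≠ y) (hbx : b ≠ x) (hby : b ≠ y)
    (hx'a : x' ≠ a) (hx'b : x' ≠ b) (hx'x : x' ≠ x) (hx'y : x' ≠ y)
    (hy'a : y' ≠ a) (hy'b : y' ≠ b) (hy'x : y' ≠ x) (hy'y : y' ≠ y)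
    (aax : G.Adj a x) (aay : G.Adj a y) (abx : G.Adj b x) (aby : G.Adj b y)
    (axx' : G.Adj x x') (ayy' : G.Adj y y')
    (nxy : ¬ G.Adj x y)
    (hNa : ∀ q, G.Adj a q → q = x ∨ q = y) (hNb : ∀ q, G.Adj b q → q = x ∨ q = y) :
    ¬ InGcs G := by
  intro hGcs
  haveI : Nonempty V := ⟨a⟩
  have hn1 : (1 : ℝ) ≤ (Fintype.card V : ℝ) := by
    exact_mod_cast Fintype.card_pos
  set ε : ℝ := 1 / (8 * (Fintype.card V : ℝ)) with hε_def
  have hε : 0 < ε := by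
    apply div_pos one_pos; linarith
  have hcardε : (Fintype.card V : ℝ) * ε = 1 / 8 := by
    rw [hε_def]; field_simp
  have hεle : ε ≤ 1 / 8 := by nlinarith
  set w : V → ℝ := fun v => if v = a ∨ v = b ∨ v = x ∨ v = y then 1 else ε with hw_def
  have hwa : w a = 1 := by rw [hw_def]; simp
  have hwb : w b = 1 := by rw [hw_def]; simp
  have hwx : w x = 1 := by rw [hw_def]; simp
  have hwy : w y = 1 := by rw [hw_def]; simp
  have hwR : ∀ v, ¬(v = a ∨ v = b ∨ v = x ∨ v = y) → w v = ε := by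
    intro v hv; rw [hw_def]; exact if_neg hv
  have hwpos : ∀ v, 0 < w v := by
    intro v; rw [hw_def]
    dsimp only; split
    · norm_num
    · exact hε
  have hw0 : ∀ v, 0 ≤ w v := fun v => (hwpos v).le
  have hwle1 : ∀ v, w v ≤ 1 := by
    intro v; rw [hw_def]; dsimp only; split
    · exact le_refl 1
    · linarith
  -- safety of S0 = {x, y}
  have hS0 : IsSafeSet G w {x, y} := by
    refine ⟨⟨x, Or.inl rfl⟩, ?_, ?_⟩
    · intro h
      have : a ∈ ({x, y} : Set V) := h.symm ▸ Set.mem_univ a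
      rcases this with rfl | h2
      · exact hax rfl
      · exact hay (Set.mem_singleton_iff.mp h2)
    · intro C D hC hD _
      obtain ⟨u, hu⟩ := comp_nonempty hC
      have huS := comp_subset hC hu
      have hwu : w u = 1 := by
        rcases huS with rfl | h2
        · exact hwx
        · rw [Set.mem_singleton_iff.mp h2]; exact hwy
      have hC1 : (1 : ℝ) ≤ setWeight w C := hwu ▸ le_sw_mem w hw0 hu
      have hD1 : setWeight w D ≤ 1 := by
        by_cases hda : a ∈ D
        · have hsub : D ⊆ {a} := by
            apply comp_subset_of_closed hD hda ({a} : Set V) rfl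
            intro u' hu' q hq hadj
            rw [Set.mem_singleton_iff] at hu'; subst hu'
            exfalso
            rcases hNa q hadj with rfl | rfl
            · exact hq (Or.inl rfl)
            · exact hq (Or.inr rfl)
          calc setWeight w D ≤ setWeight w {a} := sw_mono w hw0 hsub
            _ = 1 := by rw [sw_singleton]; exact hwa
        · by_cases hdb : b ∈ D
          · have hsub : D ⊆ {b} := by
              apply comp_subset_of_closed hD hdb ({b} : Set V) rfl
              intro u' hu' q hq hadj
              rw [Set.mem_singleton_iff] at hu'; subst hu'
              exfalso
              rcases hNb q hadj with rfl | rfl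
              · exact hq (Or.inl rfl)
              · exact hq (Or.inr rfl)
            calc setWeight w D ≤ setWeight w {b} := sw_mono w hw0 hsub
              _ = 1 := by rw [sw_singleton]; exact hwb
          · have hbnd : ∀ v ∈ D, w v ≤ ε := by
              intro v hv
              have hvS := comp_subset hD hv
              refine (hwR v ?_).le
              rintro (rfl | rfl | rfl | rfl)
              · exact hda hv
              · exact hdb hv
              · exact hvS (Or.inl rfl)
              · exact hvS (Or.inr rfl)
            calc setWeight w D ≤ (Fintype.card V : ℝ) * ε := sw_le_bound w hε.le hbnd
              _ = 1 / 8 := hcardε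
              _ ≤ 1 := by norm_num
      linarith
  have hwt : setWeight w {x, y} ≤ 2 := by
    rw [sw_pair w hxy, hwx, hwy]; norm_num
  -- lower bound for connected safe sets
  have hlow : ∀ T : Set V, IsConnSafeSet G w T → 2 + ε ≤ setWeight w T := by
    intro T hT
    have hviol2 : ∀ p q : V, p ∉ T → q ∉ T → G.Adj p q → w p + w q ≤ setWeight w T := by
      intro p q hp hq hadj
      have hpD := mem_cSet G Tᶜ p hp
      have hqD : q ∈ cSet G Tᶜ p hp :=
        comp_closed (cSet_isComp G Tᶜ p hp) hpD hq hadj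
      exact le_trans (le_sw_pair w hw0 hpD hqD hadj.ne) (viol_le hG hT hp)
    have hviol3 : ∀ p q r : V, p ∉ T → q ∉ T → r ∉ T → G.Adj p q → G.Adj q r → p ≠ r →
        w p + w q + w r ≤ setWeight w T := by
      intro p q r hp hq hr hadj1 hadj2 hpr
      have hpD := mem_cSet G Tᶜ p hp
      have hqD : q ∈ cSet G Tᶜ p hp :=
        comp_closed (cSet_isComp G Tᶜ p hp) hpD hq hadj1
      have hrD : r ∈ cSet G Tᶜ p hp :=
        comp_closed (cSet_isComp G Tᶜ p hp) hqD hr hadj2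
      exact le_trans (le_sw_triple w hw0 hpD hqD hrD hadj1.ne hpr hadj2.ne)
        (viol_le hG hT hp)
    have tri : ∀ p q r : V, p ∈ T → q ∈ T → r ∈ T → p ≠ q → p ≠ r → q ≠ r →
        w p + w q + w r ≤ setWeight w T :=
      fun p q r hp hq hr h1 h2 h3 => le_sw_triple w hw0 hp hq hr h1 h2 h3
    have hub : ∀ s : V, (∀ v ∈ T, v = s ∨ w v ≤ ε) → setWeight w T ≤ 1 + 1 / 8 := by
      intro s hs
      calc setWeight w T ≤ w s + (Fintype.card V : ℝ) * ε := sw_le_one_plus w hw0 hε.le hs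
        _ ≤ 1 + 1 / 8 := by rw [hcardε]; linarith [hwle1 s]
    by_cases ha : a ∈ T <;> by_cases hb : b ∈ T <;> by_cases hx : x ∈ T <;>
      by_cases hy : y ∈ T
    -- TTTT
    · have := tri a b x ha hb hx hab hax hbx
      rw [hwa, hwb, hwx] at this; linarith
    -- TTTF
    · have := tri a b x ha hb hx hab hax hbx
      rw [hwa, hwb, hwx] at this; linarith
    -- TTFT
    · have := tri a b y ha hb hy hab hay hby
      rw [hwa, hwb, hwy] at this; linarith
    -- TTFF : conn contradiction
    · exfalso
      have hTA : T ⊆ {a} := by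
        apply conn_subset hT.2 ({a} : Set V) rfl ha
        intro p hp q hq hadj
        rw [Set.mem_singleton_iff] at hp; subst hp
        exfalso
        rcases hNa q hadj with rfl | rfl
        · exact hx hq
        · exact hy hq
      exact hab.symm (Set.mem_singleton_iff.mp (hTA hb))
    -- TFTT
    · have := tri a x y ha hx hy hax hay hxy
      rw [hwa, hwx, hwy] at this; linarith
    -- TFTF : T ∩ H = {a, x}
    · by_cases hr : ∃ v ∈ T, ¬(v = a ∨ v = b ∨ v = x ∨ v = y)
      · obtain ⟨v, hvT, hvH⟩ := hr
        have hva : a ≠ v := fun h => hvH (Or.inl h.symm)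
        have hvx : x ≠ v := fun h => hvH (Or.inr (Or.inr (Or.inl h.symm)))
        have := tri a x v ha hx hvT hax hva hvx
        rw [hwa, hwx, hwR v hvH] at this; linarith
      · exfalso
        push_neg at hr
        have hTeq : T = {a, x} := by
          ext v; constructor
          · intro hv
            rcases hr v hv with rfl | rfl | rfl | rfl
            · exact Or.inl rfl
            · exact absurd hv hb
            · exact Or.inr rfl
            · exact absurd hv hy
          · rintro (rfl | rfl) <;> assumption
        have hwT : setWeight w T = 2 := by
          rw [hTeq, sw_pair w hax, hwa, hwx]; norm_num
        have hy'T : y' ∉ T := by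
          rw [hTeq]; rintro (rfl | rfl)
          · exact hy'a rfl
          · exact hy'x rfl
        have := hviol3 b y y' hb hy hy'T aby ayy' (Ne.symm hy'b)
        rw [hwb, hwy, hwR y' (by rintro (rfl | rfl | rfl | rfl) <;> simp_all), hwT] at this
        linarith
    -- TFFT : {a, y}
    · by_cases hr : ∃ v ∈ T, ¬(v = a ∨ v = b ∨ v = x ∨ v = y)
      · obtain ⟨v, hvT, hvH⟩ := hr
        have hva : a ≠ v := fun h => hvH (Or.inl h.symm)
        have hvy : y ≠ v := fun h => hvH (Or.inr (Or.inr (Or.inr h.symm)))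
        have := tri a y v ha hy hvT hay hva hvy
        rw [hwa, hwy, hwR v hvH] at this; linarith
      · exfalso
        push_neg at hr
        have hTeq : T = {a, y} := by
          ext v; constructor
          · intro hv
            rcases hr v hv with rfl | rfl | rfl | rfl
            · exact Or.inl rfl
            · exact absurd hv hb
            · exact absurd hv hx
            · exact Or.inr rfl
          · rintro (rfl | rfl) <;> assumption
        have hwT : setWeight w T = 2 := by
          rw [hTeq, sw_pair w hay, hwa, hwy]; norm_num
        have hx'T : x' ∉ T := by
          rw [hTeq]; rintro (rfl | rfl)
          · exact hx'a rfl
          · exact hx'y rfl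
        have := hviol3 b x x' hb hx hx'T abx axx' (Ne.symm hx'b)
        rw [hwb, hwx, hwR x' (by rintro (rfl | rfl | rfl | rfl) <;> simp_all), hwT] at this
        linarith
    -- TFFF
    · exfalso
      have hubT : setWeight w T ≤ 1 + 1 / 8 := by
        apply hub a
        intro v hv
        by_cases hva : v = a
        · exact Or.inl hva
        · refine Or.inr (hwR v ?_).le
          rintro (rfl | rfl | rfl | rfl)
          · exact hva rfl
          · exact hb hv
          · exact hx hv
          · exact hy hv
      have := hviol2 b x hb hx abx
      rw [hwb, hwx] at this; linarith
    -- FTTT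
    · have := tri b x y hb hx hy hbx hby hxy
      rw [hwb, hwx, hwy] at this; linarith
    -- FTTF : {b, x}
    · by_cases hr : ∃ v ∈ T, ¬(v = a ∨ v = b ∨ v = x ∨ v = y)
      · obtain ⟨v, hvT, hvH⟩ := hr
        have hvb : b ≠ v := fun h => hvH (Or.inr (Or.inl h.symm))
        have hvx : x ≠ v := fun h => hvH (Or.inr (Or.inr (Or.inl h.symm)))
        have := tri b x v hb hx hvT hbx hvb hvx
        rw [hwb, hwx, hwR v hvH] at this; linarith
      · exfalso
        push_neg at hr
        have hTeq : T = {b, x} := by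
          ext v; constructor
          · intro hv
            rcases hr v hv with rfl | rfl | rfl | rfl
            · exact absurd hv ha
            · exact Or.inl rfl
            · exact Or.inr rfl
            · exact absurd hv hy
          · rintro (rfl | rfl) <;> assumption
        have hwT : setWeight w T = 2 := by
          rw [hTeq, sw_pair w hbx, hwb, hwx]; norm_num
        have hy'T : y' ∉ T := by
          rw [hTeq]; rintro (rfl | rfl)
          · exact hy'b rfl
          · exact hy'x rfl
        have := hviol3 a y y' ha hy hy'T aay ayy' (Ne.symm hy'a)
        rw [hwa, hwy, hwR y' (by rintro (rfl | rfl | rfl | rfl) <;> simp_all), hwT] at this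
        linarith
    -- FTFT : {b, y}
    · by_cases hr : ∃ v ∈ T, ¬(v = a ∨ v = b ∨ v = x ∨ v = y)
      · obtain ⟨v, hvT, hvH⟩ := hr
        have hvb : b ≠ v := fun h => hvH (Or.inr (Or.inl h.symm))
        have hvy : y ≠ v := fun h => hvH (Or.inr (Or.inr (Or.inr h.symm)))
        have := tri b y v hb hy hvT hby hvb hvy
        rw [hwb, hwy, hwR v hvH] at this; linarith
      · exfalso
        push_neg at hr
        have hTeq : T = {b, y} := by
          ext v; constructor
          · intro hv
            rcases hr v hv with rfl | rfl | rfl | rfl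
            · exact absurd hv ha
            · exact Or.inl rfl
            · exact absurd hv hx
            · exact Or.inr rfl
          · rintro (rfl | rfl) <;> assumption
        have hwT : setWeight w T = 2 := by
          rw [hTeq, sw_pair w hby, hwb, hwy]; norm_num
        have hx'T : x' ∉ T := by
          rw [hTeq]; rintro (rfl | rfl)
          · exact hx'b rfl
          · exact hx'y rfl
        have := hviol3 a x x' ha hx hx'T aax axx' (Ne.symm hx'a)
        rw [hwa, hwx, hwR x' (by rintro (rfl | rfl | rfl | rfl) <;> simp_all), hwT] at this
        linarith
    -- FTFF
    · exfalso
      have hubT : setWeight w T ≤ 1 + 1 / 8 := by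
        apply hub b
        intro v hv
        by_cases hvb : v = b
        · exact Or.inl hvb
        · refine Or.inr (hwR v ?_).le
          rintro (rfl | rfl | rfl | rfl)
          · exact ha hv
          · exact hvb rfl
          · exact hx hv
          · exact hy hv
      have := hviol2 a x ha hx aax
      rw [hwa, hwx] at this; linarith
    -- FFTT : {x, y}
    · by_cases hr : ∃ v ∈ T, ¬(v = a ∨ v = b ∨ v = x ∨ v = y)
      · obtain ⟨v, hvT, hvH⟩ := hr
        have hvx : x ≠ v := fun h => hvH (Or.inr (Or.inr (Or.inl h.symm)))
        have hvy : y ≠ v := fun h => hvH (Or.inr (Or.inr (Or.inr h.symm)))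
        have := tri x y v hx hy hvT hxy hvx hvy
        rw [hwx, hwy, hwR v hvH] at this; linarith
      · exfalso
        push_neg at hr
        have hTeq : T = {x, y} := by
          ext v; constructor
          · intro hv
            rcases hr v hv with rfl | rfl | rfl | rfl
            · exact absurd hv ha
            · exact absurd hv hb
            · exact Or.inl rfl
            · exact Or.inr rfl
          · rintro (rfl | rfl) <;> assumption
        have hTA : T ⊆ {x} := by
          apply conn_subset hT.2 ({x} : Set V) rfl hx
          intro p hp q hq hadj
          rw [Set.mem_singleton_iff] at hp
          rw [hp] at hadj
          have hq2 : q ∈ ({x, y} : Set V) := hTeq ▸ hq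
          rcases hq2 with h2 | h2
          · rw [h2]; rfl
          · rw [Set.mem_singleton_iff.mp h2] at hadj
            exact absurd hadj nxy
        exact hxy (Set.mem_singleton_iff.mp (hTA hy)).symm
    -- FFTF
    · exfalso
      have hubT : setWeight w T ≤ 1 + 1 / 8 := by
        apply hub x
        intro v hv
        by_cases hvx : v = x
        · exact Or.inl hvx
        · refine Or.inr (hwR v ?_).le
          rintro (rfl | rfl | rfl | rfl)
          · exact ha hv
          · exact hb hv
          · exact hvx rfl
          · exact hy hv
      have := hviol2 a y ha hy aay
      rw [hwa, hwy] at this; linarith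
    -- FFFT
    · exfalso
      have hubT : setWeight w T ≤ 1 + 1 / 8 := by
        apply hub y
        intro v hv
        by_cases hvy : v = y
        · exact Or.inl hvy
        · refine Or.inr (hwR v ?_).le
          rintro (rfl | rfl | rfl | rfl)
          · exact ha hv
          · exact hb hv
          · exact hx hv
          · exact hvy rfl
      have := hviol2 a x ha hx aax
      rw [hwa, hwx] at this; linarith
    -- FFFF
    · exfalso
      have hubT : setWeight w T ≤ 1 + 1 / 8 := by
        apply hub a
        intro v hv
        refine Or.inr (hwR v ?_).le
        rintro (rfl | rfl | rfl | rfl)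
        · exact ha hv
        · exact hb hv
        · exact hx hv
        · exact hy hv
      have := hviol2 a x ha hx aax
      rw [hwa, hwx] at this; linarith
  exact endgame w hwpos hS0 hε hwt hlow (hGcs w hwpos)
/-! ### Bad case: N(y) = {a,b}, z a neighbor of x outside {a,b,x,y} -/

lemma badCase (G : SimpleGraph V) (hG : G.Connected) (a b x y z : V)
    (hab : a ≠ b) (hxy : x ≠ y) (hax : a ≠ x) (hay : a ≠ y) (hbx : b ≠ x) (hby : b ≠ y)
    (hza : z ≠ a) (hzb : z ≠ b) (hzx : z ≠ x) (hzy : z ≠ y)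
    (aax : G.Adj a x) (aay : G.Adj a y) (abx : G.Adj b x) (aby : G.Adj b y)
    (axz : G.Adj x z)
    (hNa : ∀ q, G.Adj a q → q = x ∨ q = y) (hNb : ∀ q, G.Adj b q → q = x ∨ q = y)
    (hNy : ∀ q, G.Adj y q → q = a ∨ q = b) :
    ¬ InGcs G := by
  intro hGcs
  haveI : Nonempty V := ⟨a⟩
  have hn1 : (1 : ℝ) ≤ (Fintype.card V : ℝ) := by exact_mod_cast Fintype.card_pos
  set ε : ℝ := 1 / (8 * (Fintype.card V : ℝ)) with hε_def
  have hε : 0 < ε := by apply div_pos one_pos; linarith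
  have hcardε : (Fintype.card V : ℝ) * ε = 1 / 8 := by
    rw [hε_def]; field_simp
  have hεle : ε ≤ 1 / 8 := by nlinarith
  set w : V → ℝ := fun v =>
    if v = y then 5/2 else if v = z then 3/2 else if v = a ∨ v = b ∨ v = x then 2 else ε
    with hw_def
  have hwa : w a = 2 := by rw [hw_def]; simp [hay, Ne.symm hza]
  have hwb : w b = 2 := by rw [hw_def]; simp [hby, Ne.symm hzb]
  have hwx : w x = 2 := by rw [hw_def]; simp [hxy, Ne.symm hzx]
  have hwy : w y = 5/2 := by rw [hw_def]; simp
  have hwz : w z = 3/2 := by rw [hw_def]; simp [hzy]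
  have hwR : ∀ v, v ≠ y → v ≠ z → ¬(v = a ∨ v = b ∨ v = x) → w v = ε := by
    intro v h1 h2 h3; rw [hw_def]; dsimp only
    rw [if_neg h1, if_neg h2, if_neg h3]
  have hwpos : ∀ v, 0 < w v := by
    intro v; rw [hw_def]; dsimp only
    split
    · norm_num
    · split
      · norm_num
      · split
        · norm_num
        · exact hε
  have hw0 : ∀ v, 0 ≤ w v := fun v => (hwpos v).le
  have hwle : ∀ v, w v ≤ 5/2 := by
    intro v; rw [hw_def]; dsimp only
    split
    · norm_num
    · split
      · norm_num
      · split
        · norm_num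
        · linarith
  -- safety of S0 = {x, y}
  have hS0 : IsSafeSet G w {x, y} := by
    refine ⟨⟨x, Or.inl rfl⟩, ?_, ?_⟩
    · intro h
      have : a ∈ ({x, y} : Set V) := h.symm ▸ Set.mem_univ a
      rcases this with h2 | h2
      · exact hax h2
      · exact hay (Set.mem_singleton_iff.mp h2)
    · intro C D hC hD _
      obtain ⟨u, hu⟩ := comp_nonempty hC
      have huS := comp_subset hC hu
      have hwu : (2:ℝ) ≤ w u := by
        rcases huS with h2 | h2
        · rw [h2, hwx]
        · rw [Set.mem_singleton_iff.mp h2, hwy]; norm_num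
      have hC2 : (2 : ℝ) ≤ setWeight w C := le_trans hwu (le_sw_mem w hw0 hu)
      have hD2 : setWeight w D ≤ 2 := by
        by_cases hda : a ∈ D
        · have hsub : D ⊆ {a} := by
            apply comp_subset_of_closed hD hda ({a} : Set V) rfl
            intro u' hu' q hq hadj
            rw [Set.mem_singleton_iff] at hu'
            rw [hu'] at hadj
            exfalso
            rcases hNa q hadj with rfl | rfl
            · exact hq (Or.inl rfl)
            · exact hq (Or.inr rfl)
          calc setWeight w D ≤ setWeight w {a} := sw_mono w hw0 hsub
            _ = 2 := by rw [sw_singleton]; exact hwa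
        · by_cases hdb : b ∈ D
          · have hsub : D ⊆ {b} := by
              apply comp_subset_of_closed hD hdb ({b} : Set V) rfl
              intro u' hu' q hq hadj
              rw [Set.mem_singleton_iff] at hu'
              rw [hu'] at hadj
              exfalso
              rcases hNb q hadj with rfl | rfl
              · exact hq (Or.inl rfl)
              · exact hq (Or.inr rfl)
            calc setWeight w D ≤ setWeight w {b} := sw_mono w hw0 hsub
              _ = 2 := by rw [sw_singleton]; exact hwb
          · have hbnd : ∀ v ∈ D, v = z ∨ w v ≤ ε := by
              intro v hv
              by_cases hvz : v = z
              · exact Or.inl hvz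
              · have hvS := comp_subset hD hv
                refine Or.inr (hwR v ?_ hvz ?_).le
                · intro h2; exact hvS (h2 ▸ Or.inr rfl)
                · rintro (rfl | rfl | rfl)
                  · exact hda hv
                  · exact hdb hv
                  · exact hvS (Or.inl rfl)
            calc setWeight w D ≤ w z + (Fintype.card V : ℝ) * ε :=
                  sw_le_one_plus w hw0 hε.le hbnd
              _ ≤ 2 := by rw [hcardε, hwz]; norm_num
      linarith
  have hwt : setWeight w {x, y} ≤ 9/2 := by
    rw [sw_pair w hxy, hwx, hwy]; norm_num
  -- lower bound for connected safe sets
  have hlow : ∀ T : Set V, IsConnSafeSet G w T → 9/2 + 1/2 ≤ setWeight w T := by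
    intro T hT
    have hviol2 : ∀ p q : V, p ∉ T → q ∉ T → G.Adj p q → w p + w q ≤ setWeight w T := by
      intro p q hp hq hadj
      have hpD := mem_cSet G Tᶜ p hp
      have hqD : q ∈ cSet G Tᶜ p hp :=
        comp_closed (cSet_isComp G Tᶜ p hp) hpD hq hadj
      exact le_trans (le_sw_pair w hw0 hpD hqD hadj.ne) (viol_le hG hT hp)
    have hviol3 : ∀ p q r : V, p ∉ T → q ∉ T → r ∉ T → G.Adj p q → G.Adj q r → p ≠ r →
        w p + w q + w r ≤ setWeight w T := by
      intro p q r hp hq hr hadj1 hadj2 hpr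
      have hpD := mem_cSet G Tᶜ p hp
      have hqD : q ∈ cSet G Tᶜ p hp :=
        comp_closed (cSet_isComp G Tᶜ p hp) hpD hq hadj1
      have hrD : r ∈ cSet G Tᶜ p hp :=
        comp_closed (cSet_isComp G Tᶜ p hp) hqD hr hadj2
      exact le_trans (le_sw_triple w hw0 hpD hqD hrD hadj1.ne hpr hadj2.ne)
        (viol_le hG hT hp)
    have tri : ∀ p q r : V, p ∈ T → q ∈ T → r ∈ T → p ≠ q → p ≠ r → q ≠ r →
        w p + w q + w r ≤ setWeight w T :=
      fun p q r hp hq hr h1 h2 h3 => le_sw_triple w hw0 hp hq hr h1 h2 h3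
    have hub2 : ∀ s t : V, s ≠ t → (∀ v ∈ T, v = s ∨ v = t ∨ w v ≤ ε) →
        setWeight w T ≤ w s + w t + 1/8 := by
      intro s t hst hs
      calc setWeight w T ≤ w s + w t + (Fintype.card V : ℝ) * ε :=
            sw_le_two_plus w hw0 hst hε.le hs
        _ = w s + w t + 1/8 := by rw [hcardε]
    by_cases ha : a ∈ T <;> by_cases hb : b ∈ T <;> by_cases hx : x ∈ T <;>
      by_cases hy : y ∈ T
    -- TTTT
    · have := tri a b x ha hb hx hab hax hbx
      rw [hwa, hwb, hwx] at this; linarith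
    -- TTTF
    · have := tri a b x ha hb hx hab hax hbx
      rw [hwa, hwb, hwx] at this; linarith
    -- TTFT
    · have := tri a b y ha hb hy hab hay hby
      rw [hwa, hwb, hwy] at this; linarith
    -- TTFF : conn contradiction
    · exfalso
      have hTA : T ⊆ {a} := by
        apply conn_subset hT.2 ({a} : Set V) rfl ha
        intro p hp q hq hadj
        rw [Set.mem_singleton_iff] at hp
        rw [hp] at hadj
        exfalso
        rcases hNa q hadj with rfl | rfl
        · exact hx hq
        · exact hy hq
      exact hab.symm (Set.mem_singleton_iff.mp (hTA hb))
    -- TFTT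
    · have := tri a x y ha hx hy hax hay hxy
      rw [hwa, hwx, hwy] at this; linarith
    -- TFTF : {a, x}
    · by_cases hz : z ∈ T
      · have := tri a x z ha hx hz hax (Ne.symm hza) (Ne.symm hzx)
        rw [hwa, hwx, hwz] at this; linarith
      · exfalso
        have hubT : setWeight w T ≤ w a + w x + 1/8 := by
          apply hub2 a x hax
          intro v hv
          by_cases hva : v = a
          · exact Or.inl hva
          · by_cases hvx : v = x
            · exact Or.inr (Or.inl hvx)
            · refine Or.inr (Or.inr (hwR v ?_ ?_ ?_).le)
              · intro h2; exact hy (h2 ▸ hv)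
              · intro h2; exact hz (h2 ▸ hv)
              · rintro (rfl | rfl | rfl)
                · exact hva rfl
                · exact hb hv
                · exact hvx rfl
        have := hviol2 b y hb hy aby
        rw [hwb, hwy] at this
        rw [hwa, hwx] at hubT
        linarith
    -- TFFT : {a, y}
    · exfalso
      have hTA : T ⊆ {a, y} := by
        apply conn_subset hT.2 ({a, y} : Set V) (Or.inl rfl) ha
        intro p hp q hq hadj
        rcases hp with h2 | h2
        · rw [h2] at hadj
          rcases hNa q hadj with rfl | rfl
          · exact absurd hq hx
          · exact Or.inr rfl
        · rw [Set.mem_singleton_iff.mp h2] at hadj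
          rcases hNy q hadj with rfl | rfl
          · exact Or.inl rfl
          · exact absurd hq hb
      have hwT : setWeight w T ≤ 9/2 := by
        calc setWeight w T ≤ setWeight w {a, y} := sw_mono w hw0 hTA
          _ = 9/2 := by rw [sw_pair w hay, hwa, hwy]; norm_num
      have hzT : z ∉ T := by
        intro h2
        rcases hTA h2 with h3 | h3
        · exact hza h3
        · exact hzy (Set.mem_singleton_iff.mp h3)
      have := hviol3 b x z hb hx hzT abx axz (Ne.symm hzb)
      rw [hwb, hwx, hwz] at this
      linarith
    -- TFFF : {a}
    · exfalso
      have hTA : T ⊆ {a} := by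
        apply conn_subset hT.2 ({a} : Set V) rfl ha
        intro p hp q hq hadj
        rw [Set.mem_singleton_iff] at hp
        rw [hp] at hadj
        exfalso
        rcases hNa q hadj with rfl | rfl
        · exact hx hq
        · exact hy hq
      have hwT : setWeight w T ≤ 2 := by
        calc setWeight w T ≤ setWeight w {a} := sw_mono w hw0 hTA
          _ = 2 := by rw [sw_singleton]; exact hwa
      have := hviol2 b y hb hy aby
      rw [hwb, hwy] at this
      linarith
    -- FTTT
    · have := tri b x y hb hx hy hbx hby hxy
      rw [hwb, hwx, hwy] at this; linarith
    -- FTTF : {b, x}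
    · by_cases hz : z ∈ T
      · have := tri b x z hb hx hz hbx (Ne.symm hzb) (Ne.symm hzx)
        rw [hwb, hwx, hwz] at this; linarith
      · exfalso
        have hubT : setWeight w T ≤ w b + w x + 1/8 := by
          apply hub2 b x hbx
          intro v hv
          by_cases hvb : v = b
          · exact Or.inl hvb
          · by_cases hvx : v = x
            · exact Or.inr (Or.inl hvx)
            · refine Or.inr (Or.inr (hwR v ?_ ?_ ?_).le)
              · intro h2; exact hy (h2 ▸ hv)
              · intro h2; exact hz (h2 ▸ hv)
              · rintro (rfl | rfl | rfl)
                · exact ha hv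
                · exact hvb rfl
                · exact hvx rfl
        have := hviol2 a y ha hy aay
        rw [hwa, hwy] at this
        rw [hwb, hwx] at hubT
        linarith
    -- FTFT : {b, y}
    · exfalso
      have hTA : T ⊆ {b, y} := by
        apply conn_subset hT.2 ({b, y} : Set V) (Or.inl rfl) hb
        intro p hp q hq hadj
        rcases hp with h2 | h2
        · rw [h2] at hadj
          rcases hNb q hadj with rfl | rfl
          · exact absurd hq hx
          · exact Or.inr rfl
        · rw [Set.mem_singleton_iff.mp h2] at hadj
          rcases hNy q hadj with rfl | rfl
          · exact absurd hq ha
          · exact Or.inl rfl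
      have hwT : setWeight w T ≤ 9/2 := by
        calc setWeight w T ≤ setWeight w {b, y} := sw_mono w hw0 hTA
          _ = 9/2 := by rw [sw_pair w hby, hwb, hwy]; norm_num
      have hzT : z ∉ T := by
        intro h2
        rcases hTA h2 with h3 | h3
        · exact hzb h3
        · exact hzy (Set.mem_singleton_iff.mp h3)
      have := hviol3 a x z ha hx hzT aax axz (Ne.symm hza)
      rw [hwa, hwx, hwz] at this
      linarith
    -- FTFF : {b}
    · exfalso
      have hTA : T ⊆ {b} := by
        apply conn_subset hT.2 ({b} : Set V) rfl hb
        intro p hp q hq hadj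
        rw [Set.mem_singleton_iff] at hp
        rw [hp] at hadj
        exfalso
        rcases hNb q hadj with rfl | rfl
        · exact hx hq
        · exact hy hq
      have hwT : setWeight w T ≤ 2 := by
        calc setWeight w T ≤ setWeight w {b} := sw_mono w hw0 hTA
          _ = 2 := by rw [sw_singleton]; exact hwb
      have := hviol2 a y ha hy aay
      rw [hwa, hwy] at this
      linarith
    -- FFTT : {x, y} impossible (y isolated in T)
    · exfalso
      have hTA : T ⊆ {y} := by
        apply conn_subset hT.2 ({y} : Set V) rfl hy
        intro p hp q hq hadj
        rw [Set.mem_singleton_iff] at hp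
        rw [hp] at hadj
        exfalso
        rcases hNy q hadj with rfl | rfl
        · exact ha hq
        · exact hb hq
      exact hxy (Set.mem_singleton_iff.mp (hTA hx))
    -- FFTF : {x}
    · exfalso
      have hubT : setWeight w T ≤ w x + w z + 1/8 := by
        apply hub2 x z (Ne.symm hzx)
        intro v hv
        by_cases hvx : v = x
        · exact Or.inl hvx
        · by_cases hvz : v = z
          · exact Or.inr (Or.inl hvz)
          · refine Or.inr (Or.inr (hwR v ?_ hvz ?_).le)
            · intro h2; exact hy (h2 ▸ hv)
            · rintro (rfl | rfl | rfl)
              · exact ha hv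
              · exact hb hv
              · exact hvx rfl
      have := hviol2 a y ha hy aay
      rw [hwa, hwy] at this
      rw [hwx, hwz] at hubT
      linarith
    -- FFFT : {y}
    · exfalso
      have hTA : T ⊆ {y} := by
        apply conn_subset hT.2 ({y} : Set V) rfl hy
        intro p hp q hq hadj
        rw [Set.mem_singleton_iff] at hp
        rw [hp] at hadj
        exfalso
        rcases hNy q hadj with rfl | rfl
        · exact ha hq
        · exact hb hq
      have hwT : setWeight w T ≤ 5/2 := by
        calc setWeight w T ≤ setWeight w {y} := sw_mono w hw0 hTA
          _ = 5/2 := by rw [sw_singleton]; exact hwy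
      have := hviol2 a x ha hx aax
      rw [hwa, hwx] at this
      linarith
    -- FFFF
    · exfalso
      have hubT : setWeight w T ≤ w z + (Fintype.card V : ℝ) * ε := by
        apply sw_le_one_plus w hw0 hε.le
        intro v hv
        by_cases hvz : v = z
        · exact Or.inl hvz
        · refine Or.inr (hwR v ?_ hvz ?_).le
          · intro h2; exact hy (h2 ▸ hv)
          · rintro (rfl | rfl | rfl)
            · exact ha hv
            · exact hb hv
            · exact hx hv
      have := hviol2 a x ha hx aax
      rw [hwa, hwx] at this
      rw [hwz, hcardε] at hubT
      linarith
  have hlow' : ∀ T : Set V, IsConnSafeSet G w T → 9/2 + 1/2 ≤ setWeight w T := hlow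
  exact endgame w hwpos hS0 (by norm_num : (0:ℝ) < 1/2) hwt hlow' (hGcs w hwpos)
theorem stmt_18 (G : SimpleGraph V) (hG : G.Connected) (hbip : G.Colorable 2)
    (hGcs : InGcs G) (hcard : 5 ≤ Fintype.card V) :
    ∀ a b : V, a ≠ b → G.degree a = 2 → G.degree b = 2 →
      G.neighborSet a ≠ G.neighborSet b := by
  intro a b hab hda hdb heq
  have hda' : (G.neighborFinset a).card = 2 := hda
  obtain ⟨x, y, hxy, hN⟩ := Finset.card_eq_two.mp hda'
  have aax : G.Adj a x := by
    rw [← SimpleGraph.mem_neighborFinset, hN]; simp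
  have aay : G.Adj a y := by
    rw [← SimpleGraph.mem_neighborFinset, hN]; simp
  have abx : G.Adj b x := by
    rw [← SimpleGraph.mem_neighborSet, ← heq, SimpleGraph.mem_neighborSet]; exact aax
  have aby : G.Adj b y := by
    rw [← SimpleGraph.mem_neighborSet, ← heq, SimpleGraph.mem_neighborSet]; exact aay
  have hNa : ∀ q, G.Adj a q → q = x ∨ q = y := by
    intro q h
    have : q ∈ G.neighborFinset a := (SimpleGraph.mem_neighborFinset G a q).mpr h
    rw [hN] at this
    simpa using this
  have hNb : ∀ q, G.Adj b q → q = x ∨ q = y := by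
    intro q h
    apply hNa
    rw [← SimpleGraph.mem_neighborSet, heq, SimpleGraph.mem_neighborSet]; exact h
  have hax : a ≠ x := aax.ne
  have hay : a ≠ y := aay.ne
  have hbx : b ≠ x := abx.ne
  have hby : b ≠ y := aby.ne
  have nxy : ¬ G.Adj x y := by
    intro h
    obtain ⟨c⟩ := hbip
    have h1 : c a ≠ c x := c.valid aax
    have h2 : c a ≠ c y := c.valid aay
    have h3 : c x ≠ c y := c.valid h
    have : ∀ p q r : Fin 2, p ≠ q → p ≠ r → q ≠ r → False := by decide
    exact this (c a) (c x) (c y) h1 h2 h3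
  by_cases hx' : ∃ v, G.Adj x v ∧ v ≠ a ∧ v ≠ b
  · by_cases hy' : ∃ v, G.Adj y v ∧ v ≠ a ∧ v ≠ b
    · -- main case
      obtain ⟨x', axx', hx'a, hx'b⟩ := hx'
      obtain ⟨y', ayy', hy'a, hy'b⟩ := hy'
      have hx'x : x' ≠ x := (axx'.ne).symm
      have hx'y : x' ≠ y := fun h => nxy (h ▸ axx')
      have hy'y : y' ≠ y := (ayy'.ne).symm
      have hy'x : y' ≠ x := fun h => nxy (Adj.symm (h ▸ ayy'))
      exact mainCase G hG a b x y x' y' hab hxy hax hay hbx hby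
        hx'a hx'b hx'x hx'y hy'a hy'b hy'x hy'y
        aax aay abx aby axx' ayy' nxy hNa hNb hGcs
    · -- bad case with y pendant
      push_neg at hy'
      have hNy : ∀ q, G.Adj y q → q = a ∨ q = b := by
        intro q h
        by_cases hqa : q = a
        · exact Or.inl hqa
        · exact Or.inr (hy' q h hqa)
      obtain ⟨z, axz, hza, hzb⟩ := hx'
      have hzx : z ≠ x := (axz.ne).symm
      have hzy : z ≠ y := fun h => nxy (h ▸ axz)
      exact badCase G hG a b x y z hab hxy hax hay hbx hby hza hzb hzx hzy
        aax aay abx aby axz hNa hNb hNy hGcs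
  · by_cases hy' : ∃ v, G.Adj y v ∧ v ≠ a ∧ v ≠ b
    · -- bad case with x pendant (mirror)
      push_neg at hx'
      have hNx : ∀ q, G.Adj x q → q = a ∨ q = b := by
        intro q h
        by_cases hqa : q = a
        · exact Or.inl hqa
        · exact Or.inr (hx' q h hqa)
      obtain ⟨z, ayz, hza, hzb⟩ := hy'
      have hzy : z ≠ y := (ayz.ne).symm
      have hzx : z ≠ x := fun h => nxy (Adj.symm (h ▸ ayz))
      have hNa' : ∀ q, G.Adj a q → q = y ∨ q = x := fun q h => (hNa q h).symm
      have hNb' : ∀ q, G.Adj b q → q = y ∨ q = x := fun q h => (hNb q h).symm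
      exact badCase G hG a b y x z hab hxy.symm hay hax hby hbx hza hzb hzy hzx
        aay aax aby abx ayz hNa' hNb' hNx hGcs
    · -- both pendant: contradiction with |V| ≥ 5
      push_neg at hx'
      push_neg at hy'
      have hNx : ∀ q, G.Adj x q → q = a ∨ q = b := by
        intro q h
        by_cases hqa : q = a
        · exact Or.inl hqa
        · exact Or.inr (hx' q h hqa)
      have hNy : ∀ q, G.Adj y q → q = a ∨ q = b := by
        intro q h
        by_cases hqa : q = a
        · exact Or.inl hqa
        · exact Or.inr (hy' q h hqa)
      set K : Set V := {a, b, x, y} with hK_def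
      have hK : ∀ p ∈ K, ∀ q, G.Adj p q → q ∈ K := by
        intro p hp q hadj
        rcases hp with rfl | rfl | rfl | hp2
        · rcases hNa q hadj with rfl | rfl
          · exact Or.inr (Or.inr (Or.inl rfl))
          · exact Or.inr (Or.inr (Or.inr rfl))
        · rcases hNb q hadj with rfl | rfl
          · exact Or.inr (Or.inr (Or.inl rfl))
          · exact Or.inr (Or.inr (Or.inr rfl))
        · rcases hNx q hadj with rfl | rfl
          · exact Or.inl rfl
          · exact Or.inr (Or.inl rfl)
        · rw [Set.mem_singleton_iff] at hp2
          rw [hp2] at hadj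
          rcases hNy q hadj with rfl | rfl
          · exact Or.inl rfl
          · exact Or.inr (Or.inl rfl)
      have hv₀ : ∃ v : V, v ∉ K := by
        by_contra hall
        push_neg at hall
        have hsub : Finset.univ ⊆ ({a, b, x, y} : Finset V) := by
          intro v _
          have := hall v
          rw [hK_def] at this
          simpa using this
        have h4 : ({a, b, x, y} : Finset V).card ≤ 4 := by
          calc ({a, b, x, y} : Finset V).card ≤ ({b, x, y} : Finset V).card + 1 :=
                Finset.card_insert_le _ _
            _ ≤ (({x, y} : Finset V).card + 1) + 1 := by
                have := Finset.card_insert_le b ({x, y} : Finset V); omega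
            _ ≤ ((({y} : Finset V).card + 1) + 1) + 1 := by
                have := Finset.card_insert_le x ({y} : Finset V); omega
            _ ≤ 4 := by simp
        have h5 : Fintype.card V ≤ 4 := by
          rw [← Finset.card_univ]
          exact le_trans (Finset.card_le_card hsub) h4
        omega
      obtain ⟨v₀, hv₀K⟩ := hv₀
      have : v₀ ∈ K := reach_closed G K hK (hG.preconnected a v₀) (Or.inl rfl)
      exact hv₀K this
end
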